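/- If ties are P-null at U, then g(U) = Σ_{a∈A} U_a·p_a(U) + ∫ ε_{a*(ε)} dP(ε): the expected maximum decomposes into the systematic utility of the chosen alternative plus the expected error term of the chosen alternative. -/

import Mathlib

open MeasureTheory

noncomputable section

variable {A : Type*} [Fintype A] [Nonempty A]

/-- The expected-maximum (social surplus) function
`g(U) = ∫ max_{a ∈ A} (U_a + ε_a) dP(ε)`. -/
def gfun (P : Measure (A → ℝ)) (U : A → ℝ) : ℝ :=
  ∫ ε, (Finset.univ.sup' Finset.univ_nonempty fun a => U a + ε a) ∂P

/-- The choice probability `p_a(U) = P({ε : U_a + ε_a > U_b + ε_b for all b ≠ a})`. -/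
def choiceProb (P : Measure (A → ℝ)) (U : A → ℝ) (a : A) : ℝ :=
  (P {ε | ∀ b, b ≠ a → U b + ε b < U a + ε a}).toReal

/-- `P` has full support: every nonempty open set has positive measure. -/
def FullSupport (P : Measure (A → ℝ)) : Prop :=
  ∀ s : Set (A → ℝ), IsOpen s → s.Nonempty → 0 < P s

/-- Ties are `P`-null at `U`: the event that the maximum of `a ↦ U_a + ε_a`
is attained at more than one alternative has probability zero. -/
def TiesNull (P : Measure (A → ℝ)) (U : A → ℝ) : Prop :=
  P {ε | ∃ a b : A, a ≠ b ∧ (∀ c, U c + ε c ≤ U a + ε a) ∧ (∀ c, U c + ε c ≤ U b + ε b)} = 0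

/-- If ties are `P`-null at `U` and `a*` is a (`P`-a.e.) maximizer
selection, then the expected maximum decomposes as the systematic utility of the chosen
alternative plus the expected error term of the chosen alternative. -/
theorem stmt7 (P : Measure (A → ℝ)) [IsProbabilityMeasure P]
    (hint : Integrable (fun ε : A → ℝ =>
      Finset.univ.sup' Finset.univ_nonempty fun a => |ε a|) P)
    (U : A → ℝ) (hties : TiesNull P U)
    (astar : (A → ℝ) → A)
    (hastar : ∀ᵐ ε ∂P, ∀ b, U b + ε b ≤ U (astar ε) + ε (astar ε)) :
    gfun P U = ∑ a, U a * choiceProb P U a + ∫ ε, ε (astar ε) ∂P := by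
  classical
  set S : A → Set (A → ℝ) := fun a => {ε | ∀ b, b ≠ a → U b + ε b < U a + ε a} with hS
  have hSmeas : ∀ a, MeasurableSet (S a) := by
    intro a
    have : S a = ⋂ b, {ε : A → ℝ | b ≠ a → U b + ε b < U a + ε a} := by
      ext ε; simp [hS, Set.mem_iInter]
    rw [this]
    refine MeasurableSet.iInter fun b => ?_
    by_cases hb : b = a
    · simp [hb]
    · have : {ε : A → ℝ | b ≠ a → U b + ε b < U a + ε a}
          = {ε : A → ℝ | U b + ε b < U a + ε a} := by
        ext ε; simp [hb]
      rw [this]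
      exact measurableSet_lt (by fun_prop) (by fun_prop)
  set f1 : (A → ℝ) → ℝ := fun ε => ∑ a, (S a).indicator (fun _ => U a) ε with hf1def
  have hf1meas : Measurable f1 := by
    refine Finset.measurable_sum _ fun a _ => ?_
    exact (measurable_const).indicator (hSmeas a)
  have hf1int : Integrable f1 P := by
    refine integrable_finset_sum _ fun a _ => ?_
    exact (integrable_const (U a)).indicator (hSmeas a)
  -- measurability of the sup
  have hsupmeas : Measurable fun ε : A → ℝ =>
      Finset.univ.sup' Finset.univ_nonempty fun a => U a + ε a := by
    have heq : (fun ε : A → ℝ =>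
        Finset.univ.sup' Finset.univ_nonempty fun a => U a + ε a)
        = Finset.univ.sup' Finset.univ_nonempty (fun a (ε : A → ℝ) => U a + ε a) := by
      ext ε
      rw [Finset.sup'_apply]
    rw [heq]
    exact Finset.measurable_sup' _ fun a _ => by fun_prop
  -- integrability of the sup
  have hsupint : Integrable (fun ε : A → ℝ =>
      Finset.univ.sup' Finset.univ_nonempty fun a => U a + ε a) P := by
    set C : ℝ := Finset.univ.sup' Finset.univ_nonempty fun a => |U a| with hC
    refine Integrable.mono' ((integrable_const C).add hint)
      hsupmeas.aestronglyMeasurable ?_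
    filter_upwards with ε
    have hb : ∀ a : A, |U a + ε a| ≤ C + Finset.univ.sup' Finset.univ_nonempty
        fun a => |ε a| := by
      intro a
      refine (abs_add_le _ _).trans (add_le_add ?_ ?_)
      · exact Finset.le_sup' (fun a => |U a|) (Finset.mem_univ a)
      · exact Finset.le_sup' (fun a => |ε a|) (Finset.mem_univ a)
    have h1 : (Finset.univ.sup' Finset.univ_nonempty fun a => U a + ε a)
        ≤ C + Finset.univ.sup' Finset.univ_nonempty fun a => |ε a| :=
      Finset.sup'_le _ _ fun a _ => (le_abs_self _).trans (hb a)
    have h2 : -(C + Finset.univ.sup' Finset.univ_nonempty fun a => |ε a|)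
        ≤ Finset.univ.sup' Finset.univ_nonempty fun a => U a + ε a := by
      obtain ⟨a, ha⟩ := (Finset.univ_nonempty : (Finset.univ : Finset A).Nonempty)
      refine le_trans ?_ (Finset.le_sup' (fun a => U a + ε a) ha)
      have := hb a
      have := neg_abs_le (U a + ε a)
      linarith
    simp only [Real.norm_eq_abs, Pi.add_apply]
    rw [abs_le]
    exact ⟨h2, h1⟩
  -- the a.e. facts
  have hnoties : ∀ᵐ ε ∂P, ε ∉ {ε : A → ℝ | ∃ a b : A, a ≠ b ∧
      (∀ c, U c + ε c ≤ U a + ε a) ∧ (∀ c, U c + ε c ≤ U b + ε b)} :=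
    measure_eq_zero_iff_ae_notMem.mp hties
  have hkey : ∀ᵐ ε ∂P, f1 ε = U (astar ε) ∧
      (Finset.univ.sup' Finset.univ_nonempty fun a => U a + ε a)
        = U (astar ε) + ε (astar ε) := by
    filter_upwards [hastar, hnoties] with ε hmax hnt
    have huniq : ∀ a, ε ∈ S a ↔ astar ε = a := by
      intro a
      constructor
      · intro ha
        by_contra hne
        exact absurd (ha (astar ε) hne) (not_lt.mpr (hmax a))
      · rintro rfl
        intro b hb
        rcases lt_or_eq_of_le (hmax b) with h | h
        · exact h
        · exact absurd ⟨astar ε, b, Ne.symm hb, hmax, fun c => (hmax c).trans h.ge⟩ hnt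
    constructor
    · have : ∀ a, (S a).indicator (fun _ => U a) ε
          = if astar ε = a then U a else 0 := by
        intro a
        by_cases h : ε ∈ S a
        · rw [Set.indicator_of_mem h, if_pos ((huniq a).mp h)]
        · rw [Set.indicator_of_notMem h, if_neg (fun hc => h ((huniq a).mpr hc))]
      simp only [hf1def, this]
      simp
    · refine le_antisymm (Finset.sup'_le _ _ fun b _ => hmax b) ?_
      exact Finset.le_sup' (fun a => U a + ε a) (Finset.mem_univ (astar ε))
  -- split the integral
  have hIf1 : ∫ ε, f1 ε ∂P = ∑ a, U a * choiceProb P U a := by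
    rw [hf1def]
    rw [integral_finset_sum _ fun a _ => (integrable_const (U a)).indicator (hSmeas a)]
    refine Finset.sum_congr rfl fun a _ => ?_
    rw [integral_indicator_const _ (hSmeas a)]
    simp [choiceProb, mul_comm, hS, measureReal_def]
  have hIe : ∫ ε, ε (astar ε) ∂P
      = ∫ ε, ((Finset.univ.sup' Finset.univ_nonempty fun a => U a + ε a) - f1 ε) ∂P := by
    refine integral_congr_ae ?_
    filter_upwards [hkey] with ε hε
    rw [hε.1, hε.2]
    ring
  rw [hIe, integral_sub hsupint hf1int, hIf1, gfun]
  ring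

end
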